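/- Let x, y ∈ 𝔹ⁿ (the open unit ball of ℝⁿ) be distinct points, and let |m| = √(|x|²|y|² − (x·y)²)/|x−y| (the distance from the origin to the line through x and y). Then s_{𝔹ⁿ}(x,y) ≥ |x−y|/√(|x−y|² + 4(1−|m|)²). -/

import Mathlib

open Metric Set

/-- The triangular ratio metric `s_G(x,y) = sup_{z ∈ ∂G} |x-y|/(|x-z|+|z-y|)`. -/
noncomputable def triangularRatio {n : ℕ} (G : Set (EuclideanSpace ℝ (Fin n)))
    (x y : EuclideanSpace ℝ (Fin n)) : ℝ :=
  ⨆ z : frontier G, dist x y / (dist x z.1 + dist z.1 y)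

/-- Distance to the boundary `d_G(x) = dist(x, ∂G)`. -/
noncomputable def distBd {n : ℕ} (G : Set (EuclideanSpace ℝ (Fin n)))
    (x : EuclideanSpace ℝ (Fin n)) : ℝ :=
  Metric.infDist x (frontier G)

/-- The distance ratio metric `j_G(x,y) = log(1 + |x-y|/min{d_G(x), d_G(y)})`. -/
noncomputable def distRatio {n : ℕ} (G : Set (EuclideanSpace ℝ (Fin n)))
    (x y : EuclideanSpace ℝ (Fin n)) : ℝ :=
  Real.log (1 + dist x y / min (distBd G x) (distBd G y))

/-- The quantity `p_G(x,y) = |x-y| / √(|x-y|² + 4 d_G(x) d_G(y))`. -/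
noncomputable def pMetric {n : ℕ} (G : Set (EuclideanSpace ℝ (Fin n)))
    (x y : EuclideanSpace ℝ (Fin n)) : ℝ :=
  dist x y / Real.sqrt (dist x y ^ 2 + 4 * distBd G x * distBd G y)

set_option maxHeartbeats 1000000
variable {n : ℕ}

lemma exists_good_boundary (x y : EuclideanSpace ℝ (Fin n))
    (hx : ‖x‖ < 1) (hy : ‖y‖ < 1) (hxy : x ≠ y) :
    ∃ z : EuclideanSpace ℝ (Fin n), ‖z‖ = 1 ∧
      dist x z + dist z y ≤ Real.sqrt (‖x - y‖ ^ 2 +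
        4 * (1 - Real.sqrt (‖x‖ ^ 2 * ‖y‖ ^ 2 - (inner ℝ x y : ℝ) ^ 2) / ‖x - y‖) ^ 2) := by
  set s : ℝ := ‖x - y‖ with hs_def
  have hs : 0 < s := by simpa [hs_def, sub_ne_zero] using hxy
  set A : ℝ := ‖x‖ ^ 2 with hA_def
  set B : ℝ := ‖y‖ ^ 2 with hB_def
  set C : ℝ := (inner ℝ x y : ℝ) with hC_def
  have hs2 : s ^ 2 = A - 2 * C + B := norm_sub_sq_real x y
  have hCS : C ^ 2 ≤ A * B := by
    have h := abs_real_inner_le_norm x y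
    nlinarith [abs_nonneg (inner ℝ x y : ℝ), sq_abs (inner ℝ x y : ℝ), norm_nonneg x, norm_nonneg y]
  have hxxy : (inner ℝ x (x - y) : ℝ) = A - C := by
    rw [inner_sub_right, real_inner_self_eq_norm_sq, hA_def, hC_def]
  have hxyy : (inner ℝ (x - y) y : ℝ) = C - B := by
    rw [inner_sub_left, real_inner_self_eq_norm_sq, hC_def, hB_def]
  rcases eq_or_lt_of_le hCS with hdeg | hpos
  · -- degenerate case: x, y, 0 collinear
    have hroot : Real.sqrt (A * B - C ^ 2) = 0 := by rw [← hdeg]; simp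
    have hss : s ^ 2 ≠ 0 := by positivity
    set a : ℝ := (A - C) / s with ha_def
    set b : ℝ := (C - B) / s with hb_def
    have ha2 : a ^ 2 = A := by
      rw [ha_def, div_pow, div_eq_iff hss]
      linear_combination (-A) * hs2 + hdeg
    have hb2 : b ^ 2 = B := by
      rw [hb_def, div_pow, div_eq_iff hss]
      linear_combination (-B) * hs2 + hdeg
    obtain ⟨ε, hε2, hεabs, hεab⟩ : ∃ ε : ℝ, ε ^ 2 = 1 ∧ |ε| = 1 ∧ 0 ≤ ε * (a + b) := by
      rcases le_or_gt 0 (a + b) with h | h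
      · exact ⟨1, by norm_num, by norm_num, by simpa⟩
      · exact ⟨-1, by norm_num, by norm_num, by nlinarith⟩
    have hnz2 : ‖(ε / s) • (x - y)‖ ^ 2 = 1 := by
      rw [norm_smul, mul_pow, ← hs_def, Real.norm_eq_abs, abs_div, hεabs, abs_of_pos hs]
      field_simp
    refine ⟨(ε / s) • (x - y), ?_, ?_⟩
    · have h0 : (0:ℝ) ≤ ‖(ε / s) • (x - y)‖ := norm_nonneg _
      nlinarith [hnz2]
    · have hxz2 : ‖x - (ε / s) • (x - y)‖ ^ 2 = (1 - ε * a) ^ 2 := by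
        rw [norm_sub_sq_real, real_inner_smul_right, hxxy, hnz2, ha_def]
        field_simp
        rw [← hA_def]
        linear_combination A * hs2 - hdeg - (A-C)^2 * hε2
      have hzy2 : ‖(ε / s) • (x - y) - y‖ ^ 2 = (1 - ε * b) ^ 2 := by
        rw [norm_sub_sq_real, real_inner_smul_left, hxyy, hnz2, hb_def]
        field_simp
        rw [← hB_def]
        linear_combination B * hs2 - hdeg - (C-B)^2 * hε2
      have hεa : ε * a < 1 := by
        have h1 : |a| = ‖x‖ := by
          rw [← Real.sqrt_sq_eq_abs, ha2, hA_def, Real.sqrt_sq (norm_nonneg x)]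
        have h2 : ε * a ≤ |a| := by
          calc ε * a ≤ |ε * a| := le_abs_self _
          _ = |ε| * |a| := abs_mul _ _
          _ = |a| := by rw [hεabs, one_mul]
        linarith [h1 ▸ h2, hx]
      have hεb : ε * b < 1 := by
        have h1 : |b| = ‖y‖ := by
          rw [← Real.sqrt_sq_eq_abs, hb2, hB_def, Real.sqrt_sq (norm_nonneg y)]
        have h2 : ε * b ≤ |b| := by
          calc ε * b ≤ |ε * b| := le_abs_self _
          _ = |ε| * |b| := abs_mul _ _
          _ = |b| := by rw [hεabs, one_mul]
        linarith [h1 ▸ h2, hy]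
      have hdxz : dist x ((ε / s) • (x - y)) = 1 - ε * a := by
        rw [dist_eq_norm, ← Real.sqrt_sq (norm_nonneg (x - (ε / s) • (x - y))), hxz2,
          Real.sqrt_sq_eq_abs, abs_of_nonneg (by linarith)]
      have hdzy : dist ((ε / s) • (x - y)) y = 1 - ε * b := by
        rw [dist_eq_norm, ← Real.sqrt_sq (norm_nonneg ((ε / s) • (x - y) - y)), hzy2,
          Real.sqrt_sq_eq_abs, abs_of_nonneg (by linarith)]
      rw [hdxz, hdzy, hroot, zero_div]
      have h2 : (2:ℝ) ≤ Real.sqrt (s ^ 2 + 4 * (1 - 0) ^ 2) := by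
        rw [show (2:ℝ) = Real.sqrt 4 by rw [show (4:ℝ) = 2^2 by norm_num, Real.sqrt_sq]; norm_num]
        apply Real.sqrt_le_sqrt
        nlinarith
      nlinarith [hεab]
  · -- nondegenerate case
    have hAB : 0 < A * B - C ^ 2 := by linarith
    have hss : (s:ℝ) ^ 2 ≠ 0 := by positivity
    obtain ⟨w, hw_def⟩ : ∃ w' : EuclideanSpace ℝ (Fin n), w' = (2:ℝ)⁻¹ • (x + y) := ⟨_, rfl⟩
    obtain ⟨c, hc_def⟩ : ∃ c' : ℝ, c' = (A - B) / (2 * s ^ 2) := ⟨_, rfl⟩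
    obtain ⟨m, hm_def⟩ : ∃ m' : EuclideanSpace ℝ (Fin n), m' = w - c • (x - y) := ⟨_, rfl⟩
    have hcs2 : c * (2 * s ^ 2) = A - B := by rw [hc_def]; field_simp
    have hyxy : (inner ℝ y (x - y) : ℝ) = C - B := by
      rw [inner_sub_right, real_inner_self_eq_norm_sq, real_inner_comm x y]
    have hww : ‖w‖ ^ 2 = (A + 2 * C + B) / 4 := by
      rw [hw_def, norm_smul, mul_pow, norm_add_sq_real, ← hA_def, ← hB_def, ← hC_def]
      norm_num
      ring
    have hwlt : ‖w‖ < 1 := by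
      have h1 : ‖w‖ = 2⁻¹ * ‖x + y‖ := by rw [hw_def, norm_smul]; norm_num
      have h2 : ‖x + y‖ ≤ ‖x‖ + ‖y‖ := norm_add_le x y
      rw [h1]; linarith
    have hwxy : (inner ℝ w (x - y) : ℝ) = (A - B) / 2 := by
      rw [hw_def, real_inner_smul_left, inner_add_left, hxxy, hyxy]
      ring
    have hmxy : (inner ℝ m (x - y) : ℝ) = 0 := by
      rw [hm_def, inner_sub_left, real_inner_smul_left, real_inner_self_eq_norm_sq, ← hs_def,
        hwxy]
      linear_combination (-(1:ℝ)/2) * hcs2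
    have hxym : (inner ℝ (x - y) m : ℝ) = 0 := by rw [real_inner_comm]; exact hmxy
    have hwm : (inner ℝ w m : ℝ) = ‖w‖ ^ 2 - c * ((A - B) / 2) := by
      rw [hm_def, inner_sub_right, real_inner_smul_right, real_inner_self_eq_norm_sq, hwxy]
    have hm2 : ‖m‖ ^ 2 = (inner ℝ w m : ℝ) := by
      rw [← real_inner_self_eq_norm_sq]
      nth_rewrite 1 [hm_def]
      rw [inner_sub_left, real_inner_smul_left, hxym]
      ring
    obtain ⟨d, hd_def⟩ : ∃ d' : ℝ, d' = ‖m‖ := ⟨_, rfl⟩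
    have hd0' : 0 ≤ d := hd_def ▸ norm_nonneg m
    have hinner_wm : (inner ℝ w m : ℝ) = d ^ 2 := by rw [hd_def]; exact hm2.symm
    have hd2 : d ^ 2 = ‖w‖ ^ 2 - c * ((A - B) / 2) := by rw [hd_def, hm2, hwm]
    have hdAB : d ^ 2 * s ^ 2 = A * B - C ^ 2 := by
      rw [hd2, hww]
      linear_combination ((A + 2*C + B)/4) * hs2 - ((A - B)/4) * hcs2
    have hd0 : 0 < d := by
      rcases hd0'.lt_or_eq with h | h
      · exact h
      · exfalso; rw [← h] at hdAB; simp at hdAB; linarith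
    have hdw2 : d ^ 2 ≤ ‖w‖ ^ 2 := by
      have hcc : c * ((A - B) / 2) = (A - B) ^ 2 / (4 * s ^ 2) := by
        rw [hc_def]; field_simp; ring
      have : (0:ℝ) ≤ (A - B) ^ 2 / (4 * s ^ 2) := by positivity
      linarith [hd2, hcc ▸ this]
    have hw2le : ‖w‖ ^ 2 ≤ 1 := pow_le_one₀ (norm_nonneg w) hwlt.le
    have hT_nonneg : (0:ℝ) ≤ 1 - ‖w‖ ^ 2 + d ^ 2 := by linarith [sq_nonneg d]
    obtain ⟨T, hT_def⟩ : ∃ T' : ℝ, T' = Real.sqrt (1 - ‖w‖ ^ 2 + d ^ 2) := ⟨_, rfl⟩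
    have hT2 : T ^ 2 = 1 - ‖w‖ ^ 2 + d ^ 2 := by rw [hT_def]; exact Real.sq_sqrt hT_nonneg
    have hT0 : 0 ≤ T := hT_def ▸ Real.sqrt_nonneg _
    have hTd : d ≤ T := by
      have h1 : d ^ 2 ≤ T ^ 2 := by linarith
      have h2 := Real.sqrt_le_sqrt h1
      rwa [Real.sqrt_sq hd0', Real.sqrt_sq hT0] at h2
    have hT1 : T ≤ 1 := by
      have h1 : T ^ 2 ≤ 1 := by linarith
      have h2 := Real.sqrt_le_sqrt h1
      rwa [Real.sqrt_sq hT0, Real.sqrt_one] at h2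
    have ht0 : 0 ≤ T - d := by linarith
    have ht1 : T - d ≤ 1 - d := by linarith
    have hdne : d ≠ 0 := hd0.ne'
    refine ⟨w + ((T - d) / d) • m, ?_, ?_⟩
    · have hz2 : ‖w + ((T - d) / d) • m‖ ^ 2 = 1 := by
        rw [norm_add_sq_real, real_inner_smul_right, hinner_wm, norm_smul, mul_pow,
          Real.norm_eq_abs, sq_abs, ← hd_def]
        have e1 : (T - d) / d * d ^ 2 = (T - d) * d := by
          rw [div_mul_eq_mul_div, pow_two, ← mul_assoc, mul_div_assoc, div_self hdne, mul_one]
        have e2 : ((T - d) / d) ^ 2 * d ^ 2 = (T - d) ^ 2 := by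
          rw [div_pow, div_mul_cancel₀ _ (pow_ne_zero 2 hdne)]
        rw [e1, e2]
        linear_combination hT2
      rw [← Real.sqrt_sq (norm_nonneg (w + ((T - d) / d) • m)), hz2, Real.sqrt_one]
    · have hxv : x - (w + ((T - d) / d) • m) = (2:ℝ)⁻¹ • (x - y) - ((T - d) / d) • m := by
        rw [hw_def]; module
      have hyv : (w + ((T - d) / d) • m) - y = (2:ℝ)⁻¹ • (x - y) + ((T - d) / d) • m := by
        rw [hw_def]; module
      have hhalf : ‖(2:ℝ)⁻¹ • (x - y)‖ ^ 2 = s ^ 2 / 4 := by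
        rw [norm_smul, mul_pow, ← hs_def, Real.norm_eq_abs, sq_abs]
        ring
      have hsm : ‖((T - d) / d) • m‖ ^ 2 = (T - d) ^ 2 := by
        rw [norm_smul, mul_pow, ← hd_def, Real.norm_eq_abs, sq_abs]
        field_simp
      have hcross : (inner ℝ ((2:ℝ)⁻¹ • (x - y)) (((T - d) / d) • m) : ℝ) = 0 := by
        rw [real_inner_smul_left, real_inner_smul_right, hxym]
        ring
      have hxz2 : ‖x - (w + ((T - d) / d) • m)‖ ^ 2 = s ^ 2 / 4 + (T - d) ^ 2 := by
        rw [hxv, norm_sub_sq_real, hcross, hhalf, hsm]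
        ring
      have hzy2 : ‖(w + ((T - d) / d) • m) - y‖ ^ 2 = s ^ 2 / 4 + (T - d) ^ 2 := by
        rw [hyv, norm_add_sq_real, hcross, hhalf, hsm]
        ring
      have hq_nonneg : (0:ℝ) ≤ s ^ 2 / 4 + (T - d) ^ 2 := by positivity
      have hd1 : dist x (w + ((T - d) / d) • m) = Real.sqrt (s ^ 2 / 4 + (T - d) ^ 2) := by
        rw [dist_eq_norm, ← Real.sqrt_sq (norm_nonneg (x - (w + ((T - d) / d) • m))), hxz2]
      have hd2' : dist (w + ((T - d) / d) • m) y = Real.sqrt (s ^ 2 / 4 + (T - d) ^ 2) := by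
        rw [dist_eq_norm, ← Real.sqrt_sq (norm_nonneg ((w + ((T - d) / d) • m) - y)), hzy2]
      have hroot_eq : Real.sqrt (A * B - C ^ 2) / s = d := by
        rw [← hdAB, Real.sqrt_mul (sq_nonneg d), Real.sqrt_sq hd0', Real.sqrt_sq hs.le]
        field_simp
      rw [hd1, hd2', hroot_eq]
      have hsum : Real.sqrt (s ^ 2 / 4 + (T - d) ^ 2) + Real.sqrt (s ^ 2 / 4 + (T - d) ^ 2)
          = Real.sqrt (4 * (s ^ 2 / 4 + (T - d) ^ 2)) := by
        rw [Real.sqrt_mul (by norm_num : (0:ℝ) ≤ 4),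
          show Real.sqrt 4 = 2 by
            rw [show (4:ℝ) = 2 ^ 2 by norm_num, Real.sqrt_sq (by norm_num : (0:ℝ) ≤ 2)]]
        ring
      have hfin : 4 * (s ^ 2 / 4 + (T - d) ^ 2) ≤ s ^ 2 + 4 * (1 - d) ^ 2 := by
        have hsq : (T - d) ^ 2 ≤ (1 - d) ^ 2 := by
          apply pow_le_pow_left₀ ht0 ht1
        linarith
      rw [hsum]
      exact Real.sqrt_le_sqrt hfin

/-- For distinct `x, y` in the unit ball `𝔹ⁿ`, with `|m| = √(|x|²|y|² - ⟨x,y⟩²)/|x-y|`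
the distance from the origin to the line through `x` and `y`,
`s_{𝔹ⁿ}(x,y) ≥ |x-y| / √(|x-y|² + 4(1-|m|)²)`. -/
theorem sB_ge_symmetric_bound {n : ℕ}
    (x y : EuclideanSpace ℝ (Fin n)) (hx : ‖x‖ < 1) (hy : ‖y‖ < 1) (hxy : x ≠ y) :
    triangularRatio (Metric.ball (0 : EuclideanSpace ℝ (Fin n)) 1) x y ≥
      ‖x - y‖ / Real.sqrt (‖x - y‖ ^ 2 +
        4 * (1 - Real.sqrt (‖x‖ ^ 2 * ‖y‖ ^ 2 - (inner ℝ x y : ℝ) ^ 2) / ‖x - y‖) ^ 2) := by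
  obtain ⟨z, hz, hzle⟩ := exists_good_boundary x y hx hy hxy
  have hfr : frontier (Metric.ball (0 : EuclideanSpace ℝ (Fin n)) 1) = sphere 0 1 :=
    frontier_ball 0 one_ne_zero
  have hzmem : z ∈ frontier (Metric.ball (0 : EuclideanSpace ℝ (Fin n)) 1) := by
    rw [hfr, mem_sphere_zero_iff_norm]; exact hz
  have hbdd : BddAbove (Set.range fun z : frontier (Metric.ball (0 : EuclideanSpace ℝ (Fin n)) 1) =>
      dist x y / (dist x z.1 + dist z.1 y)) := by
    refine ⟨1, ?_⟩
    rintro r ⟨z', rfl⟩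
    exact div_le_one_of_le₀ (dist_triangle x z'.1 y) (by positivity)
  have hd : dist x y = ‖x - y‖ := dist_eq_norm x y
  have hsumpos : 0 < dist x z + dist z y := by
    have h1 : dist x y ≤ dist x z + dist z y := dist_triangle x z y
    have h2 : 0 < dist x y := dist_pos.mpr hxy
    linarith
  calc ‖x - y‖ / Real.sqrt (‖x - y‖ ^ 2 +
        4 * (1 - Real.sqrt (‖x‖ ^ 2 * ‖y‖ ^ 2 - (inner ℝ x y : ℝ) ^ 2) / ‖x - y‖) ^ 2)
      ≤ ‖x - y‖ / (dist x z + dist z y) := by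
        apply div_le_div_of_nonneg_left (norm_nonneg _) hsumpos hzle
  _ = dist x y / (dist x z + dist z y) := by rw [hd]
  _ ≤ triangularRatio (Metric.ball (0 : EuclideanSpace ℝ (Fin n)) 1) x y :=
      le_ciSup hbdd (⟨z, hzmem⟩ : frontier (Metric.ball (0 : EuclideanSpace ℝ (Fin n)) 1))
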